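/- Let G = ([n], E) be a finite simple graph and let P = {x ∈ ℝ^n : Σ_{i∈[n]} x_i = n + |E| and Σ_{i∈σ} x_i ≥ |σ| + |E(G[σ])| for every σ ⊆ [n]}. Then a point x ∈ ℝ^n is an extreme point (vertex) of P if and only if there exists an acyclic orientation O of G such that x_i = indeg_O(i) + 1 for every i ∈ [n]. -/

import Mathlib

/-- The number of edges of the induced subgraph of `G` on `σ`. -/
noncomputable def inducedEdgeCount {n : ℕ} (G : SimpleGraph (Fin n)) (σ : Set (Fin n)) : ℕ :=
  {e : Sym2 (Fin n) | e ∈ G.edgeSet ∧ ∀ v ∈ e, v ∈ σ}.ncard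

/-- `O` is an orientation of `G`: it directs each edge of `G` in exactly one of the two
possible ways, and relates only adjacent vertices. -/
def IsOrientation {V : Type*} (G : SimpleGraph V) (O : V → V → Prop) : Prop :=
  (∀ u v, O u v → G.Adj u v) ∧ ∀ u v, G.Adj u v → (O u v ↔ ¬ O v u)

/-- The relation `O` has no directed cycles. -/
def IsAcyclicRel {V : Type*} (O : V → V → Prop) : Prop :=
  ∀ v, ¬ Relation.TransGen O v v

/-- In-degree of a vertex with respect to an orientation. -/
noncomputable def inDeg {V : Type*} (O : V → V → Prop) (i : V) : ℕ :=
  {j : V | O j i}.ncard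

open Finset
open scoped Classical

namespace St1
variable {n : ℕ} (G : SimpleGraph (Fin n))



/-- edges with all endpoints in σ, as a Finset -/
noncomputable def A (σ : Finset (Fin n)) : Finset (Sym2 (Fin n)) :=
  G.edgeFinset.filter (fun e => ∀ v ∈ e, v ∈ σ)

lemma iec_eq (σ : Finset (Fin n)) : inducedEdgeCount G ↑σ = (A G σ).card := by
  unfold inducedEdgeCount
  rw [show {e : Sym2 (Fin n) | e ∈ G.edgeSet ∧ ∀ v ∈ e, v ∈ (↑σ : Set (Fin n))} = ↑(A G σ) by
    ext e; simp [A, SimpleGraph.mem_edgeFinset]]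
  exact Set.ncard_coe_finset _

noncomputable def f (σ : Finset (Fin n)) : ℕ := σ.card + (A G σ).card

lemma A_inter (σ τ : Finset (Fin n)) : A G (σ ∩ τ) = A G σ ∩ A G τ := by
  ext e; simp only [A, mem_filter, mem_inter]; aesop

lemma A_union_subset (σ τ : Finset (Fin n)) : A G σ ∪ A G τ ⊆ A G (σ ∪ τ) := by
  intro e; simp only [A, mem_filter, mem_union]; aesop

lemma f_supermod (σ τ : Finset (Fin n)) : f G σ + f G τ ≤ f G (σ ∪ τ) + f G (σ ∩ τ) := by
  have h1 : σ.card + τ.card = (σ ∪ τ).card + (σ ∩ τ).card :=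
    (Finset.card_union_add_card_inter σ τ).symm
  have h2 : (A G σ).card + (A G τ).card ≤ (A G (σ ∪ τ)).card + (A G (σ ∩ τ)).card := by
    rw [A_inter, ← Finset.card_union_add_card_inter]
    exact Nat.add_le_add_right (Finset.card_le_card (A_union_subset G σ τ)) _
  simp only [f]; omega

lemma f_supermod_strict (σ τ : Finset (Fin n)) {a b : Fin n}
    (hab : G.Adj a b) (ha : a ∈ σ) (ha' : a ∉ τ) (hb : b ∈ τ) (hb' : b ∉ σ) :
    f G σ + f G τ < f G (σ ∪ τ) + f G (σ ∩ τ) := by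
  have h1 : σ.card + τ.card = (σ ∪ τ).card + (σ ∩ τ).card :=
    (Finset.card_union_add_card_inter σ τ).symm
  have hss : A G σ ∪ A G τ ⊂ A G (σ ∪ τ) := by
    refine ⟨A_union_subset G σ τ, fun hc => ?_⟩
    have he : s(a, b) ∈ A G (σ ∪ τ) := by
      simp only [A, mem_filter, SimpleGraph.mem_edgeFinset, SimpleGraph.mem_edgeSet]
      refine ⟨hab, ?_⟩
      intro v hv
      rcases Sym2.mem_iff.mp hv with rfl | rfl
      · exact mem_union_left _ ha
      · exact mem_union_right _ hb
    have := hc he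
    simp only [A, mem_union, mem_filter] at this
    rcases this with ⟨_, h⟩ | ⟨_, h⟩
    · exact hb' (h b (Sym2.mem_mk_right a b))
    · exact ha' (h a (Sym2.mem_mk_left a b))
  have h2 : (A G σ).card + (A G τ).card < (A G (σ ∪ τ)).card + (A G (σ ∩ τ)).card := by
    rw [A_inter, ← Finset.card_union_add_card_inter]
    exact Nat.add_lt_add_right (Finset.card_lt_card hss) _
  simp only [f]; omega



variable (O : Fin n → Fin n → Prop)

noncomputable def Pin (σ : Finset (Fin n)) : Finset (Fin n × Fin n) :=
  Finset.univ.filter (fun p => O p.1 p.2 ∧ p.2 ∈ σ)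

noncomputable def Din (σ : Finset (Fin n)) : Finset (Fin n × Fin n) :=
  Finset.univ.filter (fun p => O p.1 p.2 ∧ p.1 ∈ σ ∧ p.2 ∈ σ)

lemma inDeg_eq (i : Fin n) : inDeg O i = (Finset.univ.filter (fun j => O j i)).card := by
  unfold inDeg
  rw [show {j : Fin n | O j i} = ↑(Finset.univ.filter (fun j => O j i)) by ext j; simp]
  exact Set.ncard_coe_finset _

lemma sum_inDeg (σ : Finset (Fin n)) : ∑ v ∈ σ, inDeg O v = (Pin O σ).card := by
  rw [Finset.card_eq_sum_card_fiberwise (f := Prod.snd) (t := σ)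
    (fun p hp => by
      have hp : p ∈ Pin O σ := hp
      simp only [Pin, mem_filter] at hp; exact hp.2.2)]
  refine Finset.sum_congr rfl fun v hv => ?_
  rw [inDeg_eq]
  refine (Finset.card_bij' (fun p _ => p.1) (fun j _ => (j, v)) ?_ ?_ ?_ ?_).symm
  · intro p hp
    simp only [Pin, mem_filter, mem_univ, true_and] at hp ⊢
    rw [← hp.2]; exact hp.1.1
  · intro j hj
    simp only [Pin, mem_filter, mem_univ, true_and] at hj ⊢
    exact ⟨⟨hj, hv⟩, trivial⟩
  · intro p hp
    simp only [Pin, mem_filter, mem_univ, true_and] at hp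
    exact Prod.ext rfl hp.2.symm
  · intro j hj; rfl

lemma Din_card (hO : IsOrientation G O) (σ : Finset (Fin n)) :
    (Din O σ).card = (A G σ).card := by
  refine Finset.card_bij (fun p _ => s(p.1, p.2)) ?_ ?_ ?_
  · intro p hp
    simp only [Din, mem_filter] at hp
    obtain ⟨_, h1, h2, h3⟩ := hp
    simp only [A, mem_filter, SimpleGraph.mem_edgeFinset, SimpleGraph.mem_edgeSet]
    refine ⟨hO.1 _ _ h1, fun v hv => ?_⟩
    rcases Sym2.mem_iff.mp hv with rfl | rfl
    · exact h2
    · exact h3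
  · intro p hp q hq heq
    simp only [Din, mem_filter] at hp hq
    rcases Sym2.eq_iff.mp heq with ⟨h1, h2⟩ | ⟨h1, h2⟩
    · exact Prod.ext h1 h2
    · exfalso
      rw [h1, h2] at hp
      exact ((hO.2 _ _ (hO.1 _ _ hq.2.1)).mp hq.2.1) hp.2.1
  · intro e he
    simp only [A, mem_filter, SimpleGraph.mem_edgeFinset, SimpleGraph.mem_edgeSet] at he
    induction e with
    | _ a b =>
      obtain ⟨hadj, hmem⟩ := he
      have ha := hmem a (Sym2.mem_mk_left a b)
      have hb := hmem b (Sym2.mem_mk_right a b)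
      by_cases hab : O a b
      · exact ⟨(a, b), by simp [Din, hab, ha, hb], rfl⟩
      · have : O b a := (hO.2 b a hadj.symm).mpr hab
        exact ⟨(b, a), by simp [Din, this, ha, hb], Sym2.eq_swap⟩

lemma sum_inDeg_ge (hO : IsOrientation G O) (σ : Finset (Fin n)) :
    (A G σ).card ≤ ∑ v ∈ σ, inDeg O v := by
  rw [sum_inDeg, ← Din_card G O hO]
  refine Finset.card_le_card fun p hp => ?_
  simp only [Din, Pin, mem_filter] at hp ⊢
  exact ⟨hp.1, hp.2.1, hp.2.2.2⟩

lemma sum_inDeg_eq (hO : IsOrientation G O) (σ : Finset (Fin n))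
    (hcl : ∀ u v, O u v → v ∈ σ → u ∈ σ) :
    ∑ v ∈ σ, inDeg O v = (A G σ).card := by
  rw [sum_inDeg, ← Din_card G O hO]
  congr 1
  ext p
  simp only [Din, Pin, mem_filter]
  exact ⟨fun ⟨h1, h2, h3⟩ => ⟨h1, h2, hcl _ _ h2 h3, h3⟩, fun ⟨h1, h2, _, h4⟩ => ⟨h1, h2, h4⟩⟩



lemma A_split (σ : Finset (Fin n)) (v : Fin n) (hv : v ∈ σ) :
    (A G σ).card =
      (Finset.univ.filter (fun u => G.Adj u v ∧ u ∈ σ)).card + (A G (σ.erase v)).card := by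
  rw [← Finset.card_filter_add_card_filter_not (s := A G σ) (p := fun e => v ∈ e)]
  congr 1
  · refine (Finset.card_bij (fun u _ => s(u, v)) ?_ ?_ ?_).symm
    · intro u hu
      simp only [mem_filter, mem_univ, true_and] at hu
      simp only [A, mem_filter, SimpleGraph.mem_edgeFinset, SimpleGraph.mem_edgeSet]
      refine ⟨⟨hu.1, fun w hw => ?_⟩, Sym2.mem_mk_right u v⟩
      rcases Sym2.mem_iff.mp hw with rfl | rfl
      · exact hu.2
      · exact hv
    · intro u _ u' _ heq
      rcases Sym2.eq_iff.mp heq with ⟨h, _⟩ | ⟨h1, h2⟩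
      · exact h
      · rw [h1, ← h2]
    · intro e he
      simp only [A, mem_filter, SimpleGraph.mem_edgeFinset, SimpleGraph.mem_edgeSet] at he
      obtain ⟨⟨hadj, hmem⟩, hve⟩ := he
      induction e with
      | _ a b =>
        rcases Sym2.mem_iff.mp hve with rfl | rfl
        · refine ⟨b, ?_, Sym2.eq_swap⟩
          simp only [mem_filter, mem_univ, true_and]
          exact ⟨hadj.symm, hmem b (Sym2.mem_mk_right _ _)⟩
        · refine ⟨a, ?_, rfl⟩
          simp only [mem_filter, mem_univ, true_and]
          exact ⟨hadj, hmem a (Sym2.mem_mk_left _ _)⟩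
  · congr 1
    ext e
    simp only [A, mem_filter, SimpleGraph.mem_edgeFinset, Finset.mem_erase]
    constructor
    · rintro ⟨⟨he, hmem⟩, hve⟩
      exact ⟨he, fun w hw => ⟨fun h => hve (h ▸ hw), hmem w hw⟩⟩
    · rintro ⟨he, hmem⟩
      exact ⟨⟨he, fun w hw => (hmem w hw).2⟩, fun hve => (hmem v hve).1 rfl⟩


section Polytope
variable (x : Fin n → ℝ)

/-- σ is tight for x -/
def Tight (σ : Finset (Fin n)) : Prop := ∑ i ∈ σ, x i = (f G σ : ℝ)

lemma sum_modular (g : Fin n → ℝ) (σ τ : Finset (Fin n)) :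
    ∑ i ∈ σ ∪ τ, g i + ∑ i ∈ σ ∩ τ, g i = ∑ i ∈ σ, g i + ∑ i ∈ τ, g i := by
  have h1 : ∑ i ∈ (σ \ τ) ∪ τ, g i = ∑ i ∈ σ \ τ, g i + ∑ i ∈ τ, g i :=
    Finset.sum_union Finset.sdiff_disjoint
  have h2 : ∑ i ∈ (σ \ τ) ∪ (σ ∩ τ), g i = ∑ i ∈ σ \ τ, g i + ∑ i ∈ σ ∩ τ, g i :=
    Finset.sum_union (Finset.sdiff_disjoint.mono_right Finset.inter_subset_right)
  rw [Finset.sdiff_union_self_eq_union] at h1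
  rw [Finset.sdiff_union_inter] at h2
  linarith

variable {G x}

lemma tight_union_inter (hx2 : ∀ σ : Finset (Fin n), (f G σ : ℝ) ≤ ∑ i ∈ σ, x i) {σ τ : Finset (Fin n)} (hσ : Tight G x σ) (hτ : Tight G x τ) :
    Tight G x (σ ∪ τ) ∧ Tight G x (σ ∩ τ) := by
  have hm := sum_modular x σ τ
  have hsm : ((f G σ : ℝ) + f G τ) ≤ (f G (σ ∪ τ) : ℝ) + f G (σ ∩ τ) := by
    exact_mod_cast f_supermod G σ τ
  have h1 := hx2 (σ ∪ τ)
  have h2 := hx2 (σ ∩ τ)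
  unfold Tight at *
  constructor <;> linarith

lemma no_cross (hx2 : ∀ σ : Finset (Fin n), (f G σ : ℝ) ≤ ∑ i ∈ σ, x i) {σ τ : Finset (Fin n)} (hσ : Tight G x σ) (hτ : Tight G x τ)
    {a b : Fin n} (hab : G.Adj a b) (ha : a ∈ σ) (hb : b ∈ τ) : a ∈ τ ∨ b ∈ σ := by
  by_contra hc
  push_neg at hc
  have hsm : ((f G σ : ℝ) + f G τ) < (f G (σ ∪ τ) : ℝ) + f G (σ ∩ τ) := by
    exact_mod_cast f_supermod_strict G σ τ hab ha hc.1 hb hc.2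
  have hm := sum_modular x σ τ
  have h1 := hx2 (σ ∪ τ)
  have h2 := hx2 (σ ∩ τ)
  unfold Tight at hσ hτ
  linarith

lemma tight_empty : Tight G x ∅ := by
  have hA : A G ∅ = ∅ := by
    unfold A
    rw [Finset.filter_eq_empty_iff]
    intro e _
    induction e with
    | _ a b => exact fun h => absurd (h a (Sym2.mem_mk_left a b)) (Finset.notMem_empty a)
  simp [Tight, f, hA]

lemma tight_sup (hx2 : ∀ σ : Finset (Fin n), (f G σ : ℝ) ≤ ∑ i ∈ σ, x i) (hu : Tight G x Finset.univ) {s : Finset (Fin n)} {g : Fin n → Finset (Fin n)}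
    (hg : ∀ j ∈ s, Tight G x (g j)) : Tight G x (s.sup g) := by
  classical
  induction s using Finset.induction_on with
  | empty => simpa [Finset.sup_empty] using tight_empty (G := G) (x := x)
  | insert _ _ hj ih =>
    rw [Finset.sup_insert]
    exact (tight_union_inter hx2 (hg _ (Finset.mem_insert_self _ _))
      (ih fun j hjs => hg j (Finset.mem_insert_of_mem hjs))).1

lemma tight_inf (hx2 : ∀ σ : Finset (Fin n), (f G σ : ℝ) ≤ ∑ i ∈ σ, x i) (hu : Tight G x Finset.univ) {s : Finset (Finset (Fin n))}
    (hg : ∀ σ ∈ s, Tight G x σ) : Tight G x (s.inf id) := by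
  classical
  induction s using Finset.induction_on with
  | empty => simpa [Finset.inf_empty, Finset.top_eq_univ] using hu
  | insert _ _ hj ih =>
    rw [Finset.inf_insert]
    exact (tight_union_inter hx2 (hg _ (Finset.mem_insert_self _ _))
      (ih fun σ hσ => hg σ (Finset.mem_insert_of_mem hσ))).2

end Polytope

lemma forward {G : SimpleGraph (Fin n)} {x : Fin n → ℝ}
    (hx2 : ∀ σ : Finset (Fin n), (f G σ : ℝ) ≤ ∑ i ∈ σ, x i)
    (hu : Tight G x Finset.univ)
    (hsep : ∀ u v : Fin n, u ≠ v →
      ∃ σ, Tight G x σ ∧ ((u ∈ σ ∧ v ∉ σ) ∨ (v ∈ σ ∧ u ∉ σ))) :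
    ∃ O : Fin n → Fin n → Prop, IsOrientation G O ∧ IsAcyclicRel O ∧
      ∀ i, x i = (inDeg O i : ℝ) + 1 := by
  classical
  set T : Fin n → Finset (Fin n) := fun i =>
    ((Finset.univ : Finset (Finset (Fin n))).filter (fun σ => Tight G x σ ∧ i ∈ σ)).inf id
    with hTdef
  have hTt : ∀ i, Tight G x (T i) := fun i =>
    tight_inf hx2 hu (fun σ hσ => (Finset.mem_filter.mp hσ).2.1)
  have hiT : ∀ i, i ∈ T i := fun i =>
    Finset.singleton_subset_iff.mp (Finset.le_inf fun σ hσ =>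
      Finset.singleton_subset_iff.mpr (Finset.mem_filter.mp hσ).2.2)
  have hmin : ∀ i σ, Tight G x σ → i ∈ σ → T i ⊆ σ := fun i σ h1 h2 => by
    have hm : σ ∈ (Finset.univ : Finset (Finset (Fin n))).filter
        (fun τ => Tight G x τ ∧ i ∈ τ) := by
      simp only [Finset.mem_filter]
      exact ⟨Finset.mem_univ σ, h1, h2⟩
    have h3 : T i ≤ id σ := Finset.inf_le hm
    exact h3
  have hTT : ∀ i j, j ∈ T i → T j ⊆ T i := fun i j hj => hmin j _ (hTt i) hj
  have not_both : ∀ u v : Fin n, u ≠ v → u ∈ T v → v ∉ T u := by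
    intro u v huv hu1 hv1
    obtain ⟨σ, hσ, h⟩ := hsep u v huv
    rcases h with ⟨h1, h2⟩ | ⟨h1, h2⟩
    · exact h2 (hmin u σ hσ h1 hv1)
    · exact h2 (hmin v σ hσ h1 hu1)
  have hinotT : ∀ i j, j ∈ T i → j ≠ i → i ∉ T j := by
    intro i j hj hne hi
    exact not_both i j hne.symm hi hj
  have tight_erase : ∀ i, Tight G x ((T i).erase i) := by
    intro i
    have heq : (T i).erase i = ((T i).erase i).sup T := by
      apply Finset.Subset.antisymm
      · intro j hj
        exact (Finset.le_sup hj : T j ⊆ _) (hiT j)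
      · refine Finset.sup_le fun j hj => Finset.subset_erase.mpr
          ⟨hTT i j (Finset.mem_of_mem_erase hj), hinotT i j (Finset.mem_of_mem_erase hj)
            (Finset.ne_of_mem_erase hj)⟩
    rw [heq]
    exact tight_sup hx2 hu (fun j _ => hTt j)
  refine ⟨fun u v => G.Adj u v ∧ u ∈ T v, ⟨fun u v h => h.1, ?_⟩, ?_, ?_⟩
  · intro u v hadj
    constructor
    · intro h hc
      exact not_both u v hadj.ne h.2 hc.2
    · intro h
      refine ⟨hadj, ?_⟩
      have := no_cross hx2 (hTt u) (hTt v) hadj (hiT u) (hiT v)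
      rcases this with h1 | h1
      · exact h1
      · exact absurd ⟨hadj.symm, h1⟩ h
  · have hstrict : ∀ u v : Fin n, G.Adj u v ∧ u ∈ T v → T u ⊂ T v := by
      intro u v h
      refine Finset.ssubset_iff_subset_ne.mpr ⟨hTT v u h.2, fun hc => ?_⟩
      exact not_both u v h.1.ne h.2 (hc ▸ hiT v)
    intro v hv
    have key : ∀ a b : Fin n, Relation.TransGen (fun u v => G.Adj u v ∧ u ∈ T v) a b →
        T a ⊂ T b := by
      intro a b h
      induction h with
      | single h => exact hstrict _ _ h
      | tail h1 h2 ih => exact ih.trans (hstrict _ _ h2)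
    exact ssubset_irrefl _ (key v v hv)
  · intro i
    have hsum : x i = ∑ j ∈ T i, x j - ∑ j ∈ (T i).erase i, x j := by
      rw [← Finset.add_sum_erase _ _ (hiT i)]
      ring
    have h1 := hTt i
    have h2 := tight_erase i
    unfold Tight at h1 h2
    rw [h1, h2] at hsum
    have hA := A_split G (T i) i (hiT i)
    have hdeg : inDeg (fun u v => G.Adj u v ∧ u ∈ T v) i =
        (Finset.univ.filter (fun u => G.Adj u i ∧ u ∈ T i)).card := by
      rw [inDeg_eq, Finset.filter_congr_decidable]
    have hcard : (T i).card = ((T i).erase i).card + 1 :=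
      (Finset.card_erase_add_one (hiT i)).symm
    have hnat : f G (T i) = f G ((T i).erase i) +
        (inDeg (fun u v => G.Adj u v ∧ u ∈ T v) i + 1) := by
      unfold f
      rw [hdeg]
      omega
    rw [hsum, hnat]
    push_cast
    ring

/-- The polytope. -/
def S (G : SimpleGraph (Fin n)) : Set (Fin n → ℝ) :=
  {y : Fin n → ℝ | (∑ i, y i) = ((n + G.edgeSet.ncard : ℕ) : ℝ) ∧
    ∀ σ : Finset (Fin n), ((σ.card + inducedEdgeCount G ↑σ : ℕ) : ℝ) ≤ ∑ i ∈ σ, y i}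

lemma feas_of_mem {G : SimpleGraph (Fin n)} {y : Fin n → ℝ} (hy : y ∈ S G) :
    ∀ σ : Finset (Fin n), (f G σ : ℝ) ≤ ∑ i ∈ σ, y i := by
  intro σ
  have := hy.2 σ
  rw [iec_eq] at this
  exact_mod_cast this

lemma f_univ (G : SimpleGraph (Fin n)) : f G Finset.univ = n + G.edgeSet.ncard := by
  unfold f A
  rw [Finset.filter_true_of_mem (fun e _ => fun v _ => Finset.mem_univ v)]
  rw [show G.edgeSet = ↑G.edgeFinset from (SimpleGraph.coe_edgeFinset G).symm,
    Set.ncard_coe_finset]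
  simp

lemma tight_univ_of_mem {G : SimpleGraph (Fin n)} {y : Fin n → ℝ} (hy : y ∈ S G) :
    Tight G y Finset.univ := by
  unfold Tight
  rw [f_univ]
  exact hy.1

lemma tight_det {G : SimpleGraph (Fin n)} {x : Fin n → ℝ}
    (hx : x ∈ Set.extremePoints ℝ (S G)) {d : Fin n → ℝ}
    (hd : ∀ σ : Finset (Fin n), Tight G x σ → ∑ i ∈ σ, d i = 0) : d = 0 := by
  classical
  by_contra hd0
  have hmem := hx.1
  have hfeas := feas_of_mem hmem
  have huniv := tight_univ_of_mem hmem
  by_cases hall : ∀ σ : Finset (Fin n), Tight G x σ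
  · exact hd0 (funext fun i => by simpa using hd {i} (hall {i}))
  push_neg at hall
  have hne : (Finset.univ.filter (fun σ : Finset (Fin n) => ¬ Tight G x σ)).Nonempty := by
    obtain ⟨σ0, hσ0⟩ := hall
    exact ⟨σ0, Finset.mem_filter.mpr ⟨Finset.mem_univ _, hσ0⟩⟩
  set N := Finset.univ.filter (fun σ : Finset (Fin n) => ¬ Tight G x σ) with hN
  set c := N.inf' hne (fun σ => ∑ i ∈ σ, x i - (f G σ : ℝ)) with hc
  have hcpos : 0 < c := by
    rw [hc, Finset.lt_inf'_iff]
    intro σ hσ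
    have h1 := hfeas σ
    have h2 : ¬ Tight G x σ := (Finset.mem_filter.mp hσ).2
    unfold Tight at h2
    have : (f G σ : ℝ) < ∑ i ∈ σ, x i := lt_of_le_of_ne h1 (Ne.symm h2)
    linarith
  have hcle : ∀ σ : Finset (Fin n), ¬ Tight G x σ → c ≤ ∑ i ∈ σ, x i - (f G σ : ℝ) := by
    intro σ hσ
    exact Finset.inf'_le (fun σ => ∑ i ∈ σ, x i - (f G σ : ℝ))
      (Finset.mem_filter.mpr ⟨Finset.mem_univ _, hσ⟩)
  set M := ∑ i, |d i| with hM
  have hM0 : 0 ≤ M := Finset.sum_nonneg fun i _ => abs_nonneg _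
  set ε := c / (M + 1) with hε
  have hεpos : 0 < ε := div_pos hcpos (by linarith)
  have hbound : ∀ σ : Finset (Fin n), |∑ i ∈ σ, d i| ≤ M := by
    intro σ
    calc |∑ i ∈ σ, d i| ≤ ∑ i ∈ σ, |d i| := Finset.abs_sum_le_sum_abs _ _
      _ ≤ M := Finset.sum_le_sum_of_subset_of_nonneg (Finset.subset_univ σ)
          (fun i _ _ => abs_nonneg _)
  have hεM : ε * M ≤ c := by
    rw [hε, div_mul_eq_mul_div, div_le_iff₀ (by linarith : (0:ℝ) < M + 1)]
    nlinarith
  have hmemS : ∀ t : ℝ, |t| ≤ ε → (fun i => x i + t * d i) ∈ S G := by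
    intro t ht
    constructor
    · have h0 : ∑ i, d i = 0 := hd Finset.univ huniv
      rw [Finset.sum_add_distrib, ← Finset.mul_sum, h0, mul_zero, add_zero]
      exact hmem.1
    · intro σ
      rw [iec_eq]
      have hfσ := hfeas σ
      have hsplit : ∑ i ∈ σ, (x i + t * d i) = ∑ i ∈ σ, x i + t * ∑ i ∈ σ, d i := by
        rw [Finset.sum_add_distrib, Finset.mul_sum]
      rw [hsplit]
      push_cast
      by_cases hT : Tight G x σ
      · rw [hd σ hT, mul_zero, add_zero]
        unfold f at hfσ
        push_cast at hfσ
        linarith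
      · have h1 := hcle σ hT
        have h2 : |t * ∑ i ∈ σ, d i| ≤ ε * M := by
          rw [abs_mul]
          exact mul_le_mul ht (hbound σ) (abs_nonneg _) hεpos.le
        have h3 : -(ε * M) ≤ t * ∑ i ∈ σ, d i := neg_le_of_abs_le h2
        unfold f at h1 hfσ
        push_cast at h1 hfσ
        linarith
  have hy := hmemS ε (by rw [abs_of_pos hεpos])
  have hz := hmemS (-ε) (by rw [abs_neg, abs_of_pos hεpos])
  have hseg : x ∈ openSegment ℝ (fun i => x i + ε * d i) (fun i => x i + (-ε) * d i) := by
    refine ⟨1/2, 1/2, by norm_num, by norm_num, by norm_num, ?_⟩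
    funext i
    simp only [Pi.add_apply, Pi.smul_apply, smul_eq_mul]
    ring
  obtain ⟨-, hext⟩ := mem_extremePoints.mp hx
  have := (hext (fun i => x i + ε * d i) hy (fun i => x i + (-ε) * d i) hz hseg).1
  apply hd0
  funext i
  have hi := congrFun this i
  have : ε * d i = 0 := by linarith [hi]
  exact (mul_eq_zero.mp this).resolve_left (ne_of_gt hεpos)

lemma sep_of_extreme {G : SimpleGraph (Fin n)} {x : Fin n → ℝ}
    (hx : x ∈ Set.extremePoints ℝ (S G)) :
    ∀ u v : Fin n, u ≠ v →
      ∃ σ, Tight G x σ ∧ ((u ∈ σ ∧ v ∉ σ) ∨ (v ∈ σ ∧ u ∉ σ)) := by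
  intro u v huv
  by_contra hc
  push_neg at hc
  set d : Fin n → ℝ := fun i => (if i = u then 1 else 0) - (if i = v then 1 else 0) with hd
  have hdz : d = 0 := by
    refine tight_det hx (fun σ hσ => ?_)
    have h := hc σ hσ
    have hiff : u ∈ σ ↔ v ∈ σ := by tauto
    rw [hd]
    rw [Finset.sum_sub_distrib]
    rw [Finset.sum_ite_eq' σ u (fun _ => (1:ℝ)), Finset.sum_ite_eq' σ v (fun _ => (1:ℝ))]
    by_cases h1 : u ∈ σ
    · rw [if_pos h1, if_pos (hiff.mp h1)]; ring
    · rw [if_neg h1, if_neg (fun h2 => h1 (hiff.mpr h2))]; ring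
  have : d u = 0 := by rw [hdz]; rfl
  rw [hd] at this
  simp [huv] at this


lemma sum_indeg_real {O : Fin n → Fin n → Prop} (σ : Finset (Fin n)) :
    ∑ i ∈ σ, ((inDeg O i : ℝ) + 1) = ((∑ i ∈ σ, inDeg O i : ℕ) : ℝ) + σ.card := by
  rw [Finset.sum_add_distrib]
  push_cast
  simp

lemma sum_x_ge {G : SimpleGraph (Fin n)} {O : Fin n → Fin n → Prop} (hO : IsOrientation G O)
    (σ : Finset (Fin n)) : (f G σ : ℝ) ≤ ∑ i ∈ σ, ((inDeg O i : ℝ) + 1) := by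
  rw [sum_indeg_real]
  have := sum_inDeg_ge G O hO σ
  unfold f
  push_cast
  have h2 : ((A G σ).card : ℝ) ≤ ((∑ i ∈ σ, inDeg O i : ℕ) : ℝ) := by exact_mod_cast this
  push_cast at h2
  linarith

lemma sum_x_closed {G : SimpleGraph (Fin n)} {O : Fin n → Fin n → Prop}
    (hO : IsOrientation G O) {σ : Finset (Fin n)}
    (hcl : ∀ u v, O u v → v ∈ σ → u ∈ σ) :
    ∑ i ∈ σ, ((inDeg O i : ℝ) + 1) = (f G σ : ℝ) := by
  rw [sum_indeg_real, sum_inDeg_eq G O hO σ hcl]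
  unfold f
  push_cast
  ring

lemma backward {G : SimpleGraph (Fin n)} {O : Fin n → Fin n → Prop}
    (hO : IsOrientation G O) (hac : IsAcyclicRel O) {x : Fin n → ℝ}
    (hx : ∀ i, x i = (inDeg O i : ℝ) + 1) :
    x ∈ Set.extremePoints ℝ (S G) := by
  classical
  have hxe : ∀ σ : Finset (Fin n), ∑ i ∈ σ, x i = ∑ i ∈ σ, ((inDeg O i : ℝ) + 1) :=
    fun σ => Finset.sum_congr rfl (fun i _ => hx i)
  have hmem : x ∈ S G := by
    constructor
    · rw [hxe Finset.univ, sum_x_closed hO (fun u v _ _ => Finset.mem_univ u), f_univ]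
    · intro σ
      rw [hxe σ, iec_eq]
      have := sum_x_ge hO (O := O) σ
      unfold f at this
      exact_mod_cast this
  refine mem_extremePoints.mpr ⟨hmem, fun x₁ hx₁ x₂ hx₂ hseg => ?_⟩
  obtain ⟨a, b, ha, hb, hab, hsum⟩ := hseg
  have hs : ∀ σ : Finset (Fin n), a * ∑ i ∈ σ, x₁ i + b * ∑ i ∈ σ, x₂ i = ∑ i ∈ σ, x i := by
    intro σ
    rw [Finset.mul_sum, Finset.mul_sum, ← Finset.sum_add_distrib]
    refine Finset.sum_congr rfl (fun i _ => ?_)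
    have := congrFun hsum i
    simpa using this
  have pin : ∀ σ : Finset (Fin n), ∑ i ∈ σ, x i = (f G σ : ℝ) →
      ∑ i ∈ σ, x₁ i = (f G σ : ℝ) ∧ ∑ i ∈ σ, x₂ i = (f G σ : ℝ) := by
    intro σ hσ
    have e1 := feas_of_mem hx₁ σ
    have e2 := feas_of_mem hx₂ σ
    have hE := hs σ
    rw [hσ] at hE
    have hf : a * (f G σ : ℝ) + b * (f G σ : ℝ) = (f G σ : ℝ) := by
      rw [← add_mul, hab, one_mul]
    have P1 : a * (f G σ : ℝ) ≤ a * ∑ i ∈ σ, x₁ i := mul_le_mul_of_nonneg_left e1 ha.le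
    have P2 : b * (f G σ : ℝ) ≤ b * ∑ i ∈ σ, x₂ i := mul_le_mul_of_nonneg_left e2 hb.le
    constructor
    · have hle : a * ∑ i ∈ σ, x₁ i ≤ a * (f G σ : ℝ) := by linarith
      exact mul_left_cancel₀ (ne_of_gt ha) (le_antisymm hle P1)
    · have hle : b * ∑ i ∈ σ, x₂ i ≤ b * (f G σ : ℝ) := by linarith
      exact mul_left_cancel₀ (ne_of_gt hb) (le_antisymm hle P2)
  have coord : ∀ (w : Fin n → ℝ),
      (∀ σ : Finset (Fin n), ∑ i ∈ σ, x i = (f G σ : ℝ) → ∑ i ∈ σ, w i = (f G σ : ℝ)) →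
      w = x := by
    intro w hw
    funext v
    set σv := Finset.univ.filter (fun u => Relation.ReflTransGen O u v) with hσv
    set τv := Finset.univ.filter (fun u => Relation.TransGen O u v) with hτv
    have hclσ : ∀ a b : Fin n, O a b → b ∈ σv → a ∈ σv := by
      intro a b hab hbv
      simp only [hσv, Finset.mem_filter, Finset.mem_univ, true_and] at hbv ⊢
      exact Relation.ReflTransGen.head hab hbv
    have hclτ : ∀ a b : Fin n, O a b → b ∈ τv → a ∈ τv := by
      intro a b hab hbv
      simp only [hτv, Finset.mem_filter, Finset.mem_univ, true_and] at hbv ⊢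
      exact Relation.TransGen.head' hab hbv.to_reflTransGen
    have hvτ : v ∉ τv := by
      simp only [hτv, Finset.mem_filter, Finset.mem_univ, true_and]
      exact hac v
    have hins : σv = insert v τv := by
      ext u
      simp only [hσv, hτv, Finset.mem_filter, Finset.mem_univ, true_and, Finset.mem_insert]
      rw [Relation.reflTransGen_iff_eq_or_transGen]
      tauto
    have hxσ : ∑ i ∈ σv, x i = (f G σv : ℝ) := by rw [hxe]; exact sum_x_closed hO hclσ
    have hxτ : ∑ i ∈ τv, x i = (f G τv : ℝ) := by rw [hxe]; exact sum_x_closed hO hclτ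
    have hwσ := hw σv hxσ
    have hwτ := hw τv hxτ
    rw [hins, Finset.sum_insert hvτ] at hwσ hxσ
    linarith
  have h1 : x₁ = x := coord x₁ (fun σ hσ => (pin σ hσ).1)
  have h2 : x₂ = x := coord x₂ (fun σ hσ => (pin σ hσ).2)
  exact ⟨h1, h2⟩


end St1

/-- the vertices of the polytope
`{x : Σ x_i = n + |E|, Σ_{i∈σ} x_i ≥ |σ| + |E(G[σ])| for all σ}` are exactly the points
`(indeg_O(i) + 1)_i` for acyclic orientations `O` of `G`. -/
theorem stmt1 (n : ℕ) (G : SimpleGraph (Fin n)) (x : Fin n → ℝ) :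
    x ∈ Set.extremePoints ℝ {y : Fin n → ℝ |
        (∑ i, y i) = ((n + G.edgeSet.ncard : ℕ) : ℝ) ∧
        ∀ σ : Finset (Fin n),
          ((σ.card + inducedEdgeCount G ↑σ : ℕ) : ℝ) ≤ ∑ i ∈ σ, y i} ↔
      ∃ O : Fin n → Fin n → Prop, IsOrientation G O ∧ IsAcyclicRel O ∧
        ∀ i, x i = (inDeg O i : ℝ) + 1 := by
  have hset : {y : Fin n → ℝ |
        (∑ i, y i) = ((n + G.edgeSet.ncard : ℕ) : ℝ) ∧
        ∀ σ : Finset (Fin n),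
          ((σ.card + inducedEdgeCount G ↑σ : ℕ) : ℝ) ≤ ∑ i ∈ σ, y i} = St1.S G := rfl
  rw [hset]
  constructor
  · intro hx
    exact St1.forward (St1.feas_of_mem hx.1) (St1.tight_univ_of_mem hx.1)
      (St1.sep_of_extreme hx)
  · rintro ⟨O, hO, hac, hx⟩
    exact St1.backward hO hac hx
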